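/- Let γ ∈ (0,1], q, H, L, R > 0 and r₀ > 0. Let p₀ : (0,∞) → (0,∞) satisfy |log(p₀(s₁)/p₀(s₂))| ≤ q·γ + H·R·γ whenever s₂ ≤ s₁ ≤ (1+γ)s₂ and s₁, s₂ ∈ (0,R], and let φ : [−R², R²] → ℝ be L-Lipschitz. For x ∈ ℝᵈ with ‖x‖ ∈ [rᵢ, (1+γ)rᵢ) define x̃ := (x/‖x‖)·rᵢ (norm truncation to the annulus boundary), similarly ỹ for ‖y‖ ∈ [rⱼ, (1+γ)rⱼ). Define w(x,y) := p₀(‖x‖)·exp(φ(⟨x,y⟩)). Then for all such x, y with ‖x‖, ‖y‖ ∈ [r₀, R], exp(−(q + HR + 3L·rᵢ·rⱼ)·γ) ≤ w(x̃, ỹ)/w(x,y) ≤ exp((q + HR + 3L·rᵢ·rⱼ)·γ). -/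

import Mathlib

open Set

set_option maxHeartbeats 1000000 in
/-- Projecting points onto the inner boundaries of their spherical annuli changes
`w(x,y) = p₀(‖x‖)·exp(φ(⟨x,y⟩))` by at most a factor `exp((q + HR + 3L rᵢ rⱼ)γ)`. -/
theorem annuli_projection_ratio
    (d : ℕ) (γ q H L R r₀ ri rj : ℝ)
    (hγ : 0 < γ) (hγ1 : γ ≤ 1) (hq : 0 < q) (hH : 0 < H) (hL : 0 < L)
    (hR : 0 < R) (hr₀ : 0 < r₀) (hri : 0 < ri) (hrj : 0 < rj)
    (p₀ : ℝ → ℝ) (hp₀pos : ∀ s, 0 < s → 0 < p₀ s)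
    (hp₀ : ∀ s₁ s₂, 0 < s₂ → s₂ ≤ s₁ → s₁ ≤ (1 + γ) * s₂ → s₁ ≤ R →
      |Real.log (p₀ s₁ / p₀ s₂)| ≤ q * γ + H * R * γ)
    (φ : ℝ → ℝ)
    (hφ : ∀ u ∈ Icc (-(R ^ 2)) (R ^ 2), ∀ v ∈ Icc (-(R ^ 2)) (R ^ 2),
      |φ u - φ v| ≤ L * |u - v|)
    (x y : EuclideanSpace ℝ (Fin d))
    (hx : ‖x‖ ∈ Ico ri ((1 + γ) * ri)) (hy : ‖y‖ ∈ Ico rj ((1 + γ) * rj))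
    (hxR : ‖x‖ ∈ Icc r₀ R) (hyR : ‖y‖ ∈ Icc r₀ R) :
    Real.exp (-((q + H * R + 3 * L * ri * rj) * γ))
        ≤ (p₀ ‖(ri / ‖x‖) • x‖
              * Real.exp (φ (inner ℝ ((ri / ‖x‖) • x) ((rj / ‖y‖) • y) : ℝ)))
            / (p₀ ‖x‖ * Real.exp (φ (inner ℝ x y : ℝ))) ∧
    (p₀ ‖(ri / ‖x‖) • x‖
        * Real.exp (φ (inner ℝ ((ri / ‖x‖) • x) ((rj / ‖y‖) • y) : ℝ)))
        / (p₀ ‖x‖ * Real.exp (φ (inner ℝ x y : ℝ)))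
      ≤ Real.exp ((q + H * R + 3 * L * ri * rj) * γ) := by

  obtain ⟨hx1, hx2⟩ := hx
  obtain ⟨hy1, hy2⟩ := hy
  have hnx : 0 < ‖x‖ := lt_of_lt_of_le hri hx1
  have hny : 0 < ‖y‖ := lt_of_lt_of_le hrj hy1
  have hnorm : ‖(ri / ‖x‖) • x‖ = ri := by
    rw [norm_smul, Real.norm_eq_abs, abs_div, abs_of_pos hri, abs_of_pos hnx]
    field_simp
  set u : ℝ := inner ℝ x y with hu
  have hinner : (inner ℝ ((ri / ‖x‖) • x) ((rj / ‖y‖) • y) : ℝ)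
      = (ri / ‖x‖) * ((rj / ‖y‖) * u) := by
    rw [real_inner_smul_left, real_inner_smul_right]
  set u' : ℝ := (ri / ‖x‖) * ((rj / ‖y‖) * u) with hu'
  have hup : 0 < p₀ ri := hp₀pos ri hri
  have hxp : 0 < p₀ ‖x‖ := hp₀pos _ hnx
  have huabs : |u| ≤ ‖x‖ * ‖y‖ := abs_real_inner_le_norm x y
  have huI : u ∈ Icc (-(R ^ 2)) (R ^ 2) := by
    constructor <;> nlinarith [abs_le.mp huabs, hxR.2, hyR.2, hnx, hny]
  have hu'I : u' ∈ Icc (-(R ^ 2)) (R ^ 2) := by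
    have h1 : |u'| = ri / ‖x‖ * (rj / ‖y‖ * |u|) := by
      rw [hu', abs_mul, abs_mul, abs_div, abs_div, abs_of_pos hri, abs_of_pos hrj,
        abs_of_pos hnx, abs_of_pos hny]
    have hc1 : ri / ‖x‖ ≤ 1 := (div_le_one hnx).2 hx1
    have hc2 : rj / ‖y‖ ≤ 1 := (div_le_one hny).2 hy1
    have hc1' : 0 ≤ ri / ‖x‖ := by positivity
    have hc2' : 0 ≤ rj / ‖y‖ := by positivity
    have h2 : |u'| ≤ R ^ 2 := by
      rw [h1]
      have s1 : ri / ‖x‖ * (rj / ‖y‖ * |u|) ≤ 1 * (1 * |u|) := by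
        apply mul_le_mul hc1 _ (by positivity) one_pos.le
        exact mul_le_mul hc2 le_rfl (abs_nonneg u) one_pos.le
      have s2 : |u| ≤ R ^ 2 := by nlinarith [huabs, hxR.2, hyR.2, hnx.le, hny.le]
      linarith
    exact abs_le.mp h2
  have hdiff : |u' - u| ≤ 3 * ri * rj * γ := by
    have he : u' - u = (ri * rj - ‖x‖ * ‖y‖) * (u / (‖x‖ * ‖y‖)) := by
      rw [hu']; field_simp
    rw [he, abs_mul]
    have hxy : (0:ℝ) < ‖x‖ * ‖y‖ := mul_pos hnx hny
    have h1 : |u / (‖x‖ * ‖y‖)| ≤ 1 := by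
      rw [abs_div, abs_of_pos hxy, div_le_one hxy]
      exact huabs
    have hle : ri * rj ≤ ‖x‖ * ‖y‖ := mul_le_mul hx1 hy1 hrj.le hnx.le
    have hlt : ‖x‖ * ‖y‖ < (1 + γ) * ri * ((1 + γ) * rj) :=
      mul_lt_mul'' hx2 hy2 hnx.le hny.le
    have h2 : |ri * rj - ‖x‖ * ‖y‖| ≤ 3 * ri * rj * γ := by
      rw [abs_sub_comm, abs_of_nonneg (by linarith)]
      nlinarith [mul_pos hri hrj, mul_nonneg (mul_pos hri hrj).le (mul_nonneg hγ.le (sub_nonneg.2 hγ1))]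
    calc |ri * rj - ‖x‖ * ‖y‖| * |u / (‖x‖ * ‖y‖)| ≤ (3 * ri * rj * γ) * 1 :=
          mul_le_mul h2 h1 (abs_nonneg _) (by positivity)
      _ = 3 * ri * rj * γ := by ring
  have hφd : |φ u' - φ u| ≤ 3 * L * ri * rj * γ := by
    calc |φ u' - φ u| ≤ L * |u' - u| := hφ u' hu'I u huI
      _ ≤ L * (3 * ri * rj * γ) := mul_le_mul_of_nonneg_left hdiff hL.le
      _ = 3 * L * ri * rj * γ := by ring
  have hlog : |Real.log (p₀ ri / p₀ ‖x‖)| ≤ q * γ + H * R * γ := by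
    have h := hp₀ ‖x‖ ri hri hx1 hx2.le hxR.2
    rw [Real.log_div hxp.ne' hup.ne'] at h
    rw [Real.log_div hup.ne' hxp.ne', abs_sub_comm]
    exact h
  have hratio : (p₀ ri * Real.exp (φ u')) / (p₀ ‖x‖ * Real.exp (φ u))
      = Real.exp (Real.log (p₀ ri / p₀ ‖x‖) + (φ u' - φ u)) := by
    rw [Real.exp_add, Real.exp_log (div_pos hup hxp), Real.exp_sub, div_mul_div_comm]
  rw [hnorm, hinner, hratio]
  obtain ⟨hl1, hl2⟩ := abs_le.mp hlog
  obtain ⟨hf1, hf2⟩ := abs_le.mp hφd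
  constructor <;> rw [Real.exp_le_exp] <;> [linarith [hl1, hf1]; linarith [hl2, hf2]]
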